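/- There exists a translationally invariant 4-qubit state orthogonal to every symmetric product state, e.g., |ψ⟩ ∝ (|0101⟩ − |0011⟩ + all cyclic translations); its overlap ⟨ψ|a,a,a,a⟩ vanishes for every single-qubit state |a⟩. -/

import Mathlib

open scoped BigOperators

/-- Coefficients of the translationally invariant 4-qubit state
Σ_t T^t(|0101⟩ − |0011⟩), T the cyclic shift of tensor factors. -/
noncomputable def psiTI : (Fin 4 → Fin 2) → ℂ := fun s =>
  ∑ t : Fin 4,
    ((if (fun i => s (i + t)) = ![0, 1, 0, 1] then (1 : ℂ) else 0)
      - (if (fun i => s (i + t)) = ![0, 0, 1, 1] then (1 : ℂ) else 0))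

/-- Explicit equivalence between quadruples and functions `Fin 4 → Fin 2`. -/
def e4 : (Fin 2 × Fin 2 × Fin 2 × Fin 2) ≃ (Fin 4 → Fin 2) where
  toFun p := ![p.1, p.2.1, p.2.2.1, p.2.2.2]
  invFun s := (s 0, s 1, s 2, s 3)
  left_inv := by decide
  right_inv := by decide

/-- The state Σ_t T^t(|0101⟩−|0011⟩) is nonzero, translationally invariant, and
orthogonal to every symmetric product state |a⟩⊗|a⟩⊗|a⟩⊗|a⟩. -/
theorem stmt_12 :
    psiTI ≠ 0 ∧
    (∀ s : Fin 4 → Fin 2, psiTI (fun i => s (i + 1)) = psiTI s) ∧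
    (∀ a : Fin 2 → ℂ,
      ∑ s : Fin 4 → Fin 2, (starRingEnd ℂ) (psiTI s) * ∏ i, a (s i) = 0) := by
  refine ⟨?_, ?_, ?_⟩
  · intro h
    have h2 : psiTI ![0, 1, 0, 1] = 2 := by
      simp (config := { decide := true }) only [psiTI, Fin.sum_univ_four]
      norm_num
    rw [h] at h2
    norm_num at h2
  · intro s
    simp only [psiTI]
    refine Fintype.sum_equiv (Equiv.addLeft (1 : Fin 4)) _ _ fun t => ?_
    have h : (fun i : Fin 4 => s (i + t + 1)) = fun i => s (i + (Equiv.addLeft (1 : Fin 4)) t) := by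
      funext i
      simp [Equiv.coe_addLeft, add_assoc, add_comm (1 : Fin 4) t]
    rw [h]
  · intro a
    rw [← Equiv.sum_comp e4]
    simp (config := { decide := true }) only [psiTI, e4, Equiv.coe_fn_mk, Fintype.sum_prod_type,
      Fin.sum_univ_two, Fin.sum_univ_four, Fin.prod_univ_four, map_sub, map_one, map_zero,
      map_ofNat]
    norm_num
    rw [show (starRingEnd ℂ) 2 = 2 by simp [Complex.ext_iff]]; simp only [Matrix.cons_val]; ring
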